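/- Let k be a field of characteristic p ≠ 2. The algebra homomorphism ρ_d from the Schur superalgebra S(m|n,d) to End_k(V^{⊗d}) is injective, and its image lies in the centralizer of the signed place-permutation action of S_d; moreover the image of S(m|n,d) equals End_{kS_d}(V^{⊗d}). -/

import Mathlib

namespace SchurSuper

def pairsF (d : ℕ) : Finset (Fin d × Fin d) := Finset.univ.filter (fun q => q.1 < q.2)

/-- `γ(ε, w) = ∏_{s<t, w⁻¹ s > w⁻¹ t} (-1)^{ε_s ε_t}`. -/
def gam {d : ℕ} (eps : Fin d → ZMod 2) (w : Equiv.Perm (Fin d)) : ℤ :=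
  ∏ q ∈ (pairsF d).filter (fun q => w⁻¹ q.2 < w⁻¹ q.1),
    (if eps q.1 = 1 ∧ eps q.2 = 1 then -1 else 1)

/-- `α(δ, ε) = ∏_{s<t} (-1)^{δ_s ε_t}`. -/
def alphaSgn {d : ℕ} (del eps : Fin d → ZMod 2) : ℤ :=
  ∏ q ∈ pairsF d, (if del q.1 = 1 ∧ eps q.2 = 1 then -1 else 1)

/-- parity of index -/
def par (m n : ℕ) (x : Fin (m+n)) : ZMod 2 := if (x : ℕ) < m then 0 else 1

/-- the set `I(m|n,d)` of multi-indices, indexing the basis of `V^{⊗d}` -/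
abbrev Idx (m n d : ℕ) := Fin d → Fin (m+n)

def epsOf (m n : ℕ) {d : ℕ} (i : Idx m n d) : Fin d → ZMod 2 := fun s => par m n (i s)

/-- The matrix of the signed place-permutation action of `w ∈ S_d` on `V^{⊗d}`
(in the basis `{v_i}_{i ∈ I(m|n,d)}`): `v_j · w = γ(ε_j, w) v_{j∘w}`. -/
def Pmat (k : Type*) [Field k] (m n d : ℕ) (w : Equiv.Perm (Fin d)) :
    Matrix (Idx m n d) (Idx m n d) k :=
  fun i j => if i = j ∘ w then ((gam (epsOf m n j) w : ℤ) : k) else 0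

/-- The Schur superalgebra `S(m|n,d) = A(m|n,d)^*`, realized concretely: an element is
the function `(i,j) ↦ x(T̃_{i,j})` on double indices, and such functions are exactly
those satisfying the super-symmetry `a(i·w, j·w) = γ(ε_i + ε_j, w)·a(i,j)`. -/
def SchurCoeffs (k : Type*) [Field k] (m n d : ℕ) : Set (Idx m n d → Idx m n d → k) :=
  {a | ∀ (i j : Idx m n d) (w : Equiv.Perm (Fin d)),
    a (i ∘ w) (j ∘ w) = ((gam (fun s => epsOf m n i s + epsOf m n j s) w : ℤ) : k) * a i j}

/-- The representation `ρ_d : S(m|n,d) → End_k(V^{⊗d})`, written in matrix form: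
the matrix coefficient of `ρ_d(a)` at `(i,j)` is `α(ε_i + ε_j, ε_j)·a(i,j)`. -/
def rhoMat (k : Type*) [Field k] (m n d : ℕ) (a : Idx m n d → Idx m n d → k) :
    Matrix (Idx m n d) (Idx m n d) k :=
  fun i j => ((alphaSgn (fun s => epsOf m n i s + epsOf m n j s) (epsOf m n j) : ℤ) : k)
    * a i j

end SchurSuper

namespace SchurSuper

section Aux
-- auxiliary
def e2 (x : ZMod 2) : ℤ := if x = 1 then -1 else 1

lemma e2_add (x y : ZMod 2) : e2 (x + y) = e2 x * e2 y := by revert x y; decide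

lemma e2_mul_self (x : ZMod 2) : e2 x * e2 x = 1 := by revert x; decide

lemma e2_cases (x : ZMod 2) : e2 x = 1 ∨ e2 x = -1 := by revert x; decide

lemma if_eq_e2 (x y : ZMod 2) : (if x = 1 ∧ y = 1 then (-1 : ℤ) else 1) = e2 (x * y) := by
  revert x y; decide

lemma prod_e2 {ι : Type*} [DecidableEq ι] (S : Finset ι) (f : ι → ZMod 2) :
    ∏ q ∈ S, e2 (f q) = e2 (∑ q ∈ S, f q) := by
  induction S using Finset.induction with
  | empty => simp [e2]
  | insert _ _ h ih => rw [Finset.prod_insert h, Finset.sum_insert h, ih, e2_add]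

def invF {d : ℕ} (w : Equiv.Perm (Fin d)) : Finset (Fin d × Fin d) :=
  (pairsF d).filter (fun q => w⁻¹ q.2 < w⁻¹ q.1)

def nInvF {d : ℕ} (w : Equiv.Perm (Fin d)) : Finset (Fin d × Fin d) :=
  (pairsF d).filter (fun q => ¬ w⁻¹ q.2 < w⁻¹ q.1)

lemma gam_eq {d : ℕ} (f : Fin d → ZMod 2) (w : Equiv.Perm (Fin d)) :
    gam f w = e2 (∑ q ∈ invF w, f q.1 * f q.2) := by
  rw [← prod_e2]
  exact Finset.prod_congr rfl fun q _ => if_eq_e2 _ _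

lemma alpha_eq {d : ℕ} (f g : Fin d → ZMod 2) :
    alphaSgn f g = e2 (∑ q ∈ pairsF d, f q.1 * g q.2) := by
  rw [← prod_e2]
  exact Finset.prod_congr rfl fun q _ => if_eq_e2 _ _

lemma gam_mul_self {d : ℕ} (f : Fin d → ZMod 2) (w : Equiv.Perm (Fin d)) :
    gam f w * gam f w = 1 := by rw [gam_eq]; exact e2_mul_self _

lemma alphaSgn_mul_self {d : ℕ} (f g : Fin d → ZMod 2) :
    alphaSgn f g * alphaSgn f g = 1 := by rw [alpha_eq]; exact e2_mul_self _

/-- reindexing a sum over pairs by a permutation -/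
lemma sum_pairs_comp {d : ℕ} (w : Equiv.Perm (Fin d)) (f g : Fin d → ZMod 2) :
    (∑ q ∈ pairsF d, f (w q.1) * g (w q.2))
      = (∑ q ∈ nInvF w, f q.1 * g q.2) + ∑ q ∈ invF w, g q.1 * f q.2 := by
  have hsplit := Finset.sum_filter_add_sum_filter_not (pairsF d)
    (fun q : Fin d × Fin d => w q.1 < w q.2) (fun q => f (w q.1) * g (w q.2))
  rw [← hsplit]
  congr 1
  · refine Finset.sum_nbij' (fun q => (w q.1, w q.2)) (fun q => (w⁻¹ q.1, w⁻¹ q.2))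
      ?_ ?_ ?_ ?_ ?_
    · intro q hq
      simp only [pairsF, nInvF, Finset.mem_filter, Finset.mem_univ, true_and] at hq ⊢
      refine ⟨hq.2, ?_⟩
      simp only [Equiv.Perm.inv_def, Equiv.symm_apply_apply]
      exact not_lt_of_gt hq.1
    · intro q hq
      simp only [pairsF, nInvF, Finset.mem_filter, Finset.mem_univ, true_and,
        Equiv.Perm.inv_def, Equiv.apply_symm_apply] at hq ⊢
      have hne : w⁻¹ q.1 ≠ w⁻¹ q.2 := fun h => absurd (w⁻¹.injective h) (ne_of_lt hq.1)
      exact ⟨lt_of_le_of_ne (le_of_not_gt hq.2) hne, hq.1⟩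
    · intro q _; simp
    · intro q _; simp
    · intro q _; rfl
  · refine Finset.sum_nbij' (fun q => (w q.2, w q.1)) (fun q => (w⁻¹ q.2, w⁻¹ q.1))
      ?_ ?_ ?_ ?_ ?_
    · intro q hq
      simp only [pairsF, invF, Finset.mem_filter, Finset.mem_univ, true_and,
        Equiv.Perm.inv_def, Equiv.symm_apply_apply, not_lt] at hq ⊢
      have hne : w q.1 ≠ w q.2 := fun h => absurd (w.injective h) (ne_of_lt hq.1)
      exact ⟨lt_of_le_of_ne hq.2 (Ne.symm hne), hq.1⟩
    · intro q hq
      simp only [pairsF, invF, Finset.mem_filter, Finset.mem_univ, true_and,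
        Equiv.Perm.inv_def, Equiv.apply_symm_apply, not_lt] at hq ⊢
      exact ⟨hq.2, le_of_lt hq.1⟩
    · intro q _; simp
    · intro q _; simp
    · intro q _; exact mul_comm _ _

lemma two_zmod : (2 : ZMod 2) = 0 := rfl

/-- key `ZMod 2` identity, form 1 -/
lemma key1 {d : ℕ} (δ e : Fin d → ZMod 2) (w : Equiv.Perm (Fin d)) :
    (∑ q ∈ pairsF d, (δ (w q.1) + e (w q.1)) * e (w q.2))
      + (∑ q ∈ invF w, (δ q.1 + e q.1) * (δ q.2 + e q.2))
      + (∑ q ∈ invF w, e q.1 * e q.2)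
    = (∑ q ∈ invF w, δ q.1 * δ q.2) + ∑ q ∈ pairsF d, (δ q.1 + e q.1) * e q.2 := by
  have hp : ∀ f g : Fin d → ZMod 2, (∑ q ∈ pairsF d, f q.1 * g q.2)
      = (∑ q ∈ invF w, f q.1 * g q.2) + ∑ q ∈ nInvF w, f q.1 * g q.2 :=
    fun f g => (Finset.sum_filter_add_sum_filter_not (pairsF d) _ _).symm
  simp only [add_mul, mul_add, Finset.sum_add_distrib]
  rw [sum_pairs_comp w δ e, sum_pairs_comp w e e, hp δ e, hp e e]
  generalize (∑ q ∈ nInvF w, δ q.1 * e q.2) = x1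
  generalize (∑ q ∈ invF w, δ q.1 * e q.2) = x2
  generalize (∑ q ∈ nInvF w, e q.1 * e q.2) = x3
  generalize (∑ q ∈ invF w, e q.1 * e q.2) = x4
  generalize (∑ q ∈ invF w, e q.1 * δ q.2) = x5
  generalize (∑ q ∈ invF w, δ q.1 * δ q.2) = x6
  revert x1 x2 x3 x4 x5 x6
  decide

/-- key `ZMod 2` identity, form 2 -/
lemma key2 {d : ℕ} (δ e : Fin d → ZMod 2) (w : Equiv.Perm (Fin d)) :
    (∑ q ∈ pairsF d, (δ (w q.1) + e (w q.1)) * e (w q.2))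
      + (∑ q ∈ invF w, δ q.1 * δ q.2)
      + (∑ q ∈ invF w, e q.1 * e q.2)
    = (∑ q ∈ invF w, (δ q.1 + e q.1) * (δ q.2 + e q.2))
      + ∑ q ∈ pairsF d, (δ q.1 + e q.1) * e q.2 := by
  have hp : ∀ f g : Fin d → ZMod 2, (∑ q ∈ pairsF d, f q.1 * g q.2)
      = (∑ q ∈ invF w, f q.1 * g q.2) + ∑ q ∈ nInvF w, f q.1 * g q.2 :=
    fun f g => (Finset.sum_filter_add_sum_filter_not (pairsF d) _ _).symm
  simp only [add_mul, mul_add, Finset.sum_add_distrib]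
  rw [sum_pairs_comp w δ e, sum_pairs_comp w e e, hp δ e, hp e e]
  generalize (∑ q ∈ nInvF w, δ q.1 * e q.2) = x1
  generalize (∑ q ∈ invF w, δ q.1 * e q.2) = x2
  generalize (∑ q ∈ nInvF w, e q.1 * e q.2) = x3
  generalize (∑ q ∈ invF w, e q.1 * e q.2) = x4
  generalize (∑ q ∈ invF w, e q.1 * δ q.2) = x5
  generalize (∑ q ∈ invF w, δ q.1 * δ q.2) = x6
  revert x1 x2 x3 x4 x5 x6
  decide

lemma sign1 {d : ℕ} (δ e : Fin d → ZMod 2) (w : Equiv.Perm (Fin d)) :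
    alphaSgn (fun s => δ (w s) + e (w s)) (fun s => e (w s))
        * gam (fun s => δ s + e s) w * gam e w
      = gam δ w * alphaSgn (fun s => δ s + e s) e := by
  simp only [alpha_eq, gam_eq, ← e2_add]
  exact congrArg e2 (key1 δ e w)

lemma sign2 {d : ℕ} (δ e : Fin d → ZMod 2) (w : Equiv.Perm (Fin d)) :
    alphaSgn (fun s => δ (w s) + e (w s)) (fun s => e (w s))
        * gam δ w * gam e w
      = gam (fun s => δ s + e s) w * alphaSgn (fun s => δ s + e s) e := by
  simp only [alpha_eq, gam_eq, ← e2_add]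
  exact congrArg e2 (key2 δ e w)

end Aux

section Entries

variable {k : Type} [Field k] {m n d : ℕ}

lemma comp_eq_iff (i l : Idx m n d) (w : Equiv.Perm (Fin d)) :
    i = l ∘ ⇑w ↔ l = i ∘ ⇑w⁻¹ := by
  constructor <;> rintro rfl <;> funext s <;> simp

lemma mul_P_apply (θ : Matrix (Idx m n d) (Idx m n d) k) (w : Equiv.Perm (Fin d))
    (i j : Idx m n d) :
    (θ * Pmat k m n d w) i j = θ i (j ∘ ⇑w) * ((gam (epsOf m n j) w : ℤ) : k) := by
  classical
  simp only [Matrix.mul_apply, Pmat, mul_ite, mul_zero]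
  rw [Finset.sum_ite_eq' Finset.univ (j ∘ ⇑w) (fun l => θ i l * ((gam (epsOf m n j) w : ℤ) : k))]
  simp

lemma P_mul_apply (θ : Matrix (Idx m n d) (Idx m n d) k) (w : Equiv.Perm (Fin d))
    (i j : Idx m n d) :
    (Pmat k m n d w * θ) i j
      = ((gam (epsOf m n (i ∘ ⇑w⁻¹)) w : ℤ) : k) * θ (i ∘ ⇑w⁻¹) j := by
  classical
  simp only [Matrix.mul_apply, Pmat, ite_mul, zero_mul]
  have : ∀ l : Idx m n d, (i = l ∘ ⇑w) = (l = i ∘ ⇑w⁻¹) := fun l => propext (comp_eq_iff i l w)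
  simp only [this]
  rw [Finset.sum_ite_eq' Finset.univ (i ∘ ⇑w⁻¹)
    (fun l => ((gam (epsOf m n l) w : ℤ) : k) * θ l j)]
  simp

end Entries

end SchurSuper

open SchurSuper in
/-- The representation `ρ_d : S(m|n,d) → End_k(V^{⊗d})` is injective, its image lies in
the centralizer of the signed place-permutation action of `S_d`, and its image equals
`End_{kS_d}(V^{⊗d})`. -/
theorem rho_injective_image_eq_centralizer (k : Type) [Field k]
    (hk : ringChar k ≠ 2) (m n d : ℕ) :
    (Set.InjOn (rhoMat k m n d) (SchurCoeffs k m n d)) ∧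
    (∀ a ∈ SchurCoeffs k m n d, ∀ w : Equiv.Perm (Fin d),
        rhoMat k m n d a * Pmat k m n d w = Pmat k m n d w * rhoMat k m n d a) ∧
    (∀ θ : Matrix (Idx m n d) (Idx m n d) k,
        (∀ w : Equiv.Perm (Fin d), θ * Pmat k m n d w = Pmat k m n d w * θ) →
        ∃ a ∈ SchurCoeffs k m n d, rhoMat k m n d a = θ) := by
  refine ⟨?_, ?_, ?_⟩
  · -- injectivity
    intro a _ b _ hab
    funext i j
    have h := congrFun (congrFun hab i) j
    simp only [rhoMat] at h
    have hα : ((alphaSgn (fun s => epsOf m n i s + epsOf m n j s) (epsOf m n j) : ℤ) : k) ≠ 0 := by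
      rcases e2_cases (∑ q ∈ pairsF d,
          (fun s => epsOf m n i s + epsOf m n j s) q.1 * epsOf m n j q.2) with hc | hc <;>
        rw [alpha_eq, hc] <;> simp
    exact mul_left_cancel₀ hα h
  · -- commutation
    intro a ha w
    ext i j
    rw [mul_P_apply, P_mul_apply]
    simp only [rhoMat]
    have hiw : (i ∘ ⇑w⁻¹) ∘ ⇑w = i := by funext s; simp
    have hc := ha (i ∘ ⇑w⁻¹) j w
    rw [hiw] at hc
    rw [hc]
    have hδ : epsOf m n i = fun s => epsOf m n (i ∘ ⇑w⁻¹) (w s) := by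
      funext s; simp [epsOf]
    have he : epsOf m n (j ∘ ⇑w) = fun s => epsOf m n j (w s) := rfl
    rw [hδ, he]
    have hz := sign1 (epsOf m n (i ∘ ⇑w⁻¹)) (epsOf m n j) w
    have hzk : ((alphaSgn (fun s => epsOf m n (i ∘ ⇑w⁻¹) (w s) + epsOf m n j (w s))
            (fun s => epsOf m n j (w s))
          * gam (fun s => epsOf m n (i ∘ ⇑w⁻¹) s + epsOf m n j s) w
          * gam (epsOf m n j) w : ℤ) : k)
        = ((gam (epsOf m n (i ∘ ⇑w⁻¹)) w
          * alphaSgn (fun s => epsOf m n (i ∘ ⇑w⁻¹) s + epsOf m n j s) (epsOf m n j) : ℤ) : k) := by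
      exact_mod_cast congrArg (fun z : ℤ => ((z : ℤ) : k)) hz
    push_cast at hzk ⊢
    linear_combination (a (i ∘ ⇑w⁻¹) j) * hzk
  · -- surjectivity onto the centralizer
    intro θ hθ
    refine ⟨fun i j => ((alphaSgn (fun s => epsOf m n i s + epsOf m n j s) (epsOf m n j) : ℤ) : k)
      * θ i j, ?_, ?_⟩
    · intro i j w
      have h1 := congrFun (congrFun (hθ w) (i ∘ ⇑w)) j
      rw [mul_P_apply, P_mul_apply] at h1
      have hiw : (i ∘ ⇑w) ∘ ⇑w⁻¹ = i := by funext s; simp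
      rw [hiw] at h1
      have hg : ((gam (epsOf m n j) w : ℤ) : k) * ((gam (epsOf m n j) w : ℤ) : k) = 1 := by
        rw [← Int.cast_mul, gam_mul_self]; exact Int.cast_one
      have hθ' : θ (i ∘ ⇑w) (j ∘ ⇑w)
          = ((gam (epsOf m n i) w : ℤ) : k) * ((gam (epsOf m n j) w : ℤ) : k) * θ i j := by
        linear_combination ((gam (epsOf m n j) w : ℤ) : k) * h1
          - θ (i ∘ ⇑w) (j ∘ ⇑w) * hg
      show ((alphaSgn (fun s => epsOf m n i (w s) + epsOf m n j (w s))
            (fun s => epsOf m n j (w s)) : ℤ) : k) * θ (i ∘ ⇑w) (j ∘ ⇑w) = _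
      rw [hθ']
      have hz := sign2 (epsOf m n i) (epsOf m n j) w
      have hzk : ((alphaSgn (fun s => epsOf m n i (w s) + epsOf m n j (w s))
              (fun s => epsOf m n j (w s))
            * gam (epsOf m n i) w * gam (epsOf m n j) w : ℤ) : k)
          = ((gam (fun s => epsOf m n i s + epsOf m n j s) w
            * alphaSgn (fun s => epsOf m n i s + epsOf m n j s) (epsOf m n j) : ℤ) : k) := by
        exact_mod_cast congrArg (fun z : ℤ => ((z : ℤ) : k)) hz
      push_cast at hzk ⊢
      linear_combination (θ i j) * hzk
    · funext i j
      show ((alphaSgn (fun s => epsOf m n i s + epsOf m n j s) (epsOf m n j) : ℤ) : k)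
          * (((alphaSgn (fun s => epsOf m n i s + epsOf m n j s) (epsOf m n j) : ℤ) : k) * θ i j)
        = θ i j
      have hα : ((alphaSgn (fun s => epsOf m n i s + epsOf m n j s) (epsOf m n j) : ℤ) : k)
          * ((alphaSgn (fun s => epsOf m n i s + epsOf m n j s) (epsOf m n j) : ℤ) : k) = 1 := by
        rw [← Int.cast_mul, alphaSgn_mul_self]; exact Int.cast_one
      linear_combination (θ i j) * hα
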